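/- Let n ≥ 3 and let X be a quandle of cyclic type with n elements. Then Inn(X) acting on X is a Frobenius permutation group: the stabilizers of any two distinct points intersect trivially. -/

import Mathlib

/-- The inner automorphism group of a quandle: the subgroup of permutations
generated by the maps `φ x : y ↦ x ◃ y`. -/
def Inn (X : Type*) [Quandle X] : Subgroup (Equiv.Perm X) :=
  Subgroup.closure (Set.range (fun x : X => Rack.act' x))


/-- A finite quandle is of cyclic type if each `φ x` is a cycle whose unique
fixed point is `x` (i.e. it acts as an `(n-1)`-cycle on `X \ {x}`). -/
def IsCyclicType (X : Type*) [Quandle X] : Prop :=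
  ∀ x : X, Equiv.Perm.IsCycle (Rack.act' x) ∧ ∀ y : X, Rack.act' x y = y ↔ y = x

/-- Every element of `Inn X` conjugates `act' z` to `act' (f z)`. -/
lemma Inn_conj_act' {X : Type*} [Quandle X] (f : Equiv.Perm X) (hf : f ∈ Inn X) :
    ∀ z : X, f * Rack.act' z * f⁻¹ = Rack.act' (f z) := by
  refine Subgroup.closure_induction ?_ ?_ ?_ ?_ hf
  · rintro g ⟨x, rfl⟩ z
    exact (Rack.ad_conj x z).symm
  · intro z; simp
  · intro g h _ _ hg hh z
    have := hg (h z)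
    have := hh z
    calc g * h * Rack.act' z * (g * h)⁻¹
        = g * (h * Rack.act' z * h⁻¹) * g⁻¹ := by group
      _ = g * Rack.act' (h z) * g⁻¹ := by rw [hh z]
      _ = Rack.act' (g (h z)) := hg (h z)
      _ = Rack.act' ((g * h) z) := rfl
  · intro g _ hg z
    have h1 := hg (g⁻¹ z)
    rw [show g (g⁻¹ z) = z from Equiv.apply_symm_apply g z] at h1
    rw [inv_inv]
    calc g⁻¹ * Rack.act' z * g
        = g⁻¹ * (g * Rack.act' (g⁻¹ z) * g⁻¹) * g := by rw [h1]
      _ = Rack.act' (g⁻¹ z) := by group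

theorem stmt6 {X : Type*} [Quandle X] [Fintype X] (h3 : 3 ≤ Fintype.card X)
    (hc : IsCyclicType X) :
    ∀ x y : X, x ≠ y → ∀ f ∈ Inn X, f x = x → f y = y → f = 1 := by
  intro x y hxy f hf hfx hfy
  set σ : Equiv.Perm X := Rack.act' x with hσ
  have hcomm : f * σ = σ * f := by
    have := Inn_conj_act' f hf x
    rw [hfx] at this
    calc f * σ = f * σ * f⁻¹ * f := by group
      _ = σ * f := by rw [this]
  obtain ⟨hcyc, hfix⟩ := hc x
  -- f commutes with all integer powers of σ
  have hcommz : ∀ (i : ℤ) (z : X), f ((σ ^ i) z) = (σ ^ i) (f z) := by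
    intro i z
    have : f * σ ^ i = σ ^ i * f := Commute.zpow_right hcomm i
    calc f ((σ ^ i) z) = (f * σ ^ i) z := rfl
      _ = (σ ^ i * f) z := by rw [this]
      _ = (σ ^ i) (f z) := rfl
  ext z
  simp only [Equiv.Perm.one_apply]
  by_cases hz : z = x
  · rw [hz]; exact hfx
  · -- z and y are both in the support of σ, hence same cycle
    have hy : σ y ≠ y := fun h => hxy ((hfix y).mp h).symm
    have hzs : σ z ≠ z := fun h => hz ((hfix z).mp h)
    have hsc : σ.SameCycle y z := (hcyc.sameCycle hy hzs)
    obtain ⟨i, hi⟩ := hsc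
    rw [← hi, hcommz i y, hfy]
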